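/- Let ν₀, ν₁ > 0 and 0 < η < 1, and define the spike-and-slab penalty pen(θ) = -log[(η/(2ν₁))e^{-|θ|/ν₁} + ((1-η)/(2ν₀))e^{-|θ|/ν₀}]. Then for any δ ≠ 0, the derivative satisfies |pen'(δ)| < (1/ν₁)(1 + ξ(δ)) where ξ(δ) = (ν₁²(1-η)/(ν₀²η)) · exp(-|δ|(1/ν₀ - 1/ν₁)). In particular, if ν₀ < ν₁ and |δ| ≥ ψ with (ν₁²(1-η))/(ν₀²η) ≤ ξ·exp(ψ(1/ν₀ - 1/ν₁)), then |pen'(δ)| < (1/ν₁)(1 + ξ). -/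

import Mathlib

/-- The BAGUS spike-and-slab penalty
`pen(θ) = -log[(η/(2ν₁))e^{-|θ|/ν₁} + ((1-η)/(2ν₀))e^{-|θ|/ν₀}]`. -/
noncomputable def ssPenalty (ν₀ ν₁ η θ : ℝ) : ℝ :=
  -Real.log (η / (2 * ν₁) * Real.exp (-|θ| / ν₁) +
    (1 - η) / (2 * ν₀) * Real.exp (-|θ| / ν₀))

lemma ssPenalty_aux (ν₀ ν₁ η : ℝ)
    (hν₀ : 0 < ν₀) (hν₁ : 0 < ν₁) (hη₀ : 0 < η) (hη₁ : η < 1)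
    (δ : ℝ) (hδ : δ ≠ 0) :
    ∃ d : ℝ, HasDerivAt (ssPenalty ν₀ ν₁ η) d δ ∧
      |d| < (1 / ν₁) * (1 + ν₁ ^ 2 * (1 - η) / (ν₀ ^ 2 * η) *
        Real.exp (-|δ| * (1 / ν₀ - 1 / ν₁))) := by
  set a := η / (2 * ν₁) with ha
  set b := (1 - η) / (2 * ν₀) with hb
  have hapos : 0 < a := by positivity
  have hbpos : 0 < b := div_pos (by linarith) (by linarith)
  set w₁ := a * Real.exp (-|δ| / ν₁) with hw₁
  set w₀ := b * Real.exp (-|δ| / ν₀) with hw₀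
  have hw₁pos : 0 < w₁ := by positivity
  have hw₀pos : 0 < w₀ := by positivity
  -- derivative of the inner function g(θ) = a exp(-|θ|/ν₁) + b exp(-|θ|/ν₀)
  set s : ℝ := (SignType.sign δ : ℝ) with hs
  have habs : HasDerivAt (fun θ : ℝ => |θ|) s δ := hasDerivAt_abs hδ
  have h1 : HasDerivAt (fun θ : ℝ => a * Real.exp (-|θ| / ν₁))
      (a * (Real.exp (-|δ| / ν₁) * (-s / ν₁))) δ := by
    have : HasDerivAt (fun θ : ℝ => -|θ| / ν₁) (-s / ν₁) δ := habs.neg.div_const ν₁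
    exact (this.exp.const_mul a)
  have h0 : HasDerivAt (fun θ : ℝ => b * Real.exp (-|θ| / ν₀))
      (b * (Real.exp (-|δ| / ν₀) * (-s / ν₀))) δ := by
    have : HasDerivAt (fun θ : ℝ => -|θ| / ν₀) (-s / ν₀) δ := habs.neg.div_const ν₀
    exact (this.exp.const_mul b)
  have hg : HasDerivAt (fun θ : ℝ => a * Real.exp (-|θ| / ν₁) + b * Real.exp (-|θ| / ν₀))
      (w₁ * (-s / ν₁) + w₀ * (-s / ν₀)) δ := by
    have := h1.add h0
    exact this.congr_deriv (by rw [hw₁, hw₀]; ring)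
  have hgpos : 0 < w₁ + w₀ := by linarith
  have hpen : HasDerivAt (ssPenalty ν₀ ν₁ η)
      (-((w₁ * (-s / ν₁) + w₀ * (-s / ν₀)) / (w₁ + w₀))) δ := by
    have hlog := (hg.log (ne_of_gt hgpos)).neg
    exact hlog
  refine ⟨_, hpen, ?_⟩
  have hsabs : |s| = 1 := by
    rcases lt_or_gt_of_ne hδ with h | h
    · simp [hs, Real.sign_of_neg, h]
    · simp [hs, Real.sign_of_pos, h]
  have habsd : |(-((w₁ * (-s / ν₁) + w₀ * (-s / ν₀)) / (w₁ + w₀)))|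
      = (w₁ / ν₁ + w₀ / ν₀) / (w₁ + w₀) := by
    have : -((w₁ * (-s / ν₁) + w₀ * (-s / ν₀)) / (w₁ + w₀))
        = s * ((w₁ / ν₁ + w₀ / ν₀) / (w₁ + w₀)) := by ring
    rw [this, abs_mul, hsabs, one_mul, abs_of_pos]
    positivity
  rw [habsd]
  -- the RHS equals 1/ν₁ + w₀/(ν₀ * w₁)
  have hξ : (1 / ν₁) * (1 + ν₁ ^ 2 * (1 - η) / (ν₀ ^ 2 * η) *
      Real.exp (-|δ| * (1 / ν₀ - 1 / ν₁))) = 1 / ν₁ + w₀ / (ν₀ * w₁) := by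
    rw [hw₀, hw₁, ha, hb]
    rw [show (-|δ| * (1 / ν₀ - 1 / ν₁)) = (-|δ| / ν₀) - (-|δ| / ν₁) by
      field_simp; ring, Real.exp_sub]
    have he₁ : Real.exp (-|δ| / ν₁) ≠ 0 := (Real.exp_pos _).ne'
    field_simp
  rw [hξ]
  rw [div_lt_iff₀ hgpos]
  have key : 0 < w₀ / ν₁ + (w₀ / (ν₀ * w₁)) * w₀ := by positivity
  have expand : (1 / ν₁ + w₀ / (ν₀ * w₁)) * (w₁ + w₀)
      = w₁ / ν₁ + w₀ / ν₀ + (w₀ / ν₁ + (w₀ / (ν₀ * w₁)) * w₀) := by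
    field_simp
  linarith [expand, key]

/-- for `δ ≠ 0` the penalty is differentiable at `δ` with
`|pen'(δ)| < (1/ν₁)(1 + ξ(δ))` where
`ξ(δ) = (ν₁²(1-η)/(ν₀²η)) exp(-|δ|(1/ν₀ - 1/ν₁))`; in particular, if `ν₀ < ν₁`,
`|δ| ≥ ψ > 0` and `ν₁²(1-η)/(ν₀²η) ≤ ξ·exp(ψ(1/ν₀ - 1/ν₁))`, then
`|pen'(δ)| < (1/ν₁)(1 + ξ)`. -/
theorem ssPenalty_deriv_bound (ν₀ ν₁ η : ℝ)
    (hν₀ : 0 < ν₀) (hν₁ : 0 < ν₁) (hη₀ : 0 < η) (hη₁ : η < 1) :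
    (∀ δ : ℝ, δ ≠ 0 → ∃ d : ℝ, HasDerivAt (ssPenalty ν₀ ν₁ η) d δ ∧
      |d| < (1 / ν₁) * (1 + ν₁ ^ 2 * (1 - η) / (ν₀ ^ 2 * η) *
        Real.exp (-|δ| * (1 / ν₀ - 1 / ν₁)))) ∧
    (ν₀ < ν₁ → ∀ ψ ξ δ : ℝ, 0 < ψ → ψ ≤ |δ| →
      ν₁ ^ 2 * (1 - η) / (ν₀ ^ 2 * η) ≤ ξ * Real.exp (ψ * (1 / ν₀ - 1 / ν₁)) →
      ∃ d : ℝ, HasDerivAt (ssPenalty ν₀ ν₁ η) d δ ∧ |d| < (1 / ν₁) * (1 + ξ)) := by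
  constructor
  · exact fun δ hδ => ssPenalty_aux ν₀ ν₁ η hν₀ hν₁ hη₀ hη₁ δ hδ
  · intro hlt ψ ξ δ hψ hψδ hC
    have hδ : δ ≠ 0 := by
      intro h; rw [h] at hψδ; simp at hψδ; linarith
    obtain ⟨d, hd, hbd⟩ := ssPenalty_aux ν₀ ν₁ η hν₀ hν₁ hη₀ hη₁ δ hδ
    refine ⟨d, hd, lt_of_lt_of_le hbd ?_⟩
    have hpos : (0:ℝ) < 1 / ν₀ - 1 / ν₁ := by
      rw [sub_pos]; exact one_div_lt_one_div_of_lt hν₀ hlt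
    have hmono : Real.exp (-|δ| * (1 / ν₀ - 1 / ν₁))
        ≤ Real.exp (-ψ * (1 / ν₀ - 1 / ν₁)) := by
      apply Real.exp_le_exp.mpr
      nlinarith
    have hCpos : 0 ≤ ν₁ ^ 2 * (1 - η) / (ν₀ ^ 2 * η) := by
      apply div_nonneg <;> nlinarith
    have : ν₁ ^ 2 * (1 - η) / (ν₀ ^ 2 * η) * Real.exp (-|δ| * (1 / ν₀ - 1 / ν₁))
        ≤ ξ := by
      calc ν₁ ^ 2 * (1 - η) / (ν₀ ^ 2 * η) * Real.exp (-|δ| * (1 / ν₀ - 1 / ν₁))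
          ≤ ν₁ ^ 2 * (1 - η) / (ν₀ ^ 2 * η) * Real.exp (-ψ * (1 / ν₀ - 1 / ν₁)) :=
            mul_le_mul_of_nonneg_left hmono hCpos
        _ ≤ (ξ * Real.exp (ψ * (1 / ν₀ - 1 / ν₁))) * Real.exp (-ψ * (1 / ν₀ - 1 / ν₁)) :=
            mul_le_mul_of_nonneg_right hC (Real.exp_pos _).le
        _ = ξ := by rw [mul_assoc, ← Real.exp_add]; simp
    have h1ν : (0:ℝ) ≤ 1 / ν₁ := by positivity
    nlinarith
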